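/- An odd cycle C_{2n+1} (n ≥ 1) has no equitable edge 2-coloring, but has an equitable edge k-coloring for every k ≥ 3; hence its equitable edge chromatic threshold equals 3. -/

import Mathlib

open SimpleGraph
open scoped Fin.CommRing

noncomputable def ecount {V : Type*} (G : SimpleGraph V) (φ : Sym2 V → ℕ) (v : V) (i : ℕ) : ℕ :=
  {e ∈ G.edgeSet | v ∈ e ∧ φ e = i}.ncard

/-- φ is an equitable edge k-coloring of G: colors lie in {1,…,k} and at every vertex
the numbers of incident edges in any two color classes differ by at most 1. -/
def IsEquitableEdgeColoring {V : Type*} (G : SimpleGraph V) (k : ℕ) (φ : Sym2 V → ℕ) : Prop :=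
  (∀ e ∈ G.edgeSet, φ e ∈ Finset.Icc 1 k) ∧
  ∀ v : V, ∀ i j : ℕ, 1 ≤ i → i < j → j ≤ k →
    ((ecount G φ v i : ℤ) - (ecount G φ v j : ℤ)).natAbs ≤ 1

/-- The equitable edge chromatic threshold: the least k such that G has an equitable
edge k'-coloring for every k' ≥ k. -/
noncomputable def equitableEdgeThreshold {V : Type*} (G : SimpleGraph V) : ℕ :=
  sInf {k : ℕ | ∀ k', k ≤ k' → ∃ φ, IsEquitableEdgeColoring G k' φ}

section Aux

variable {m : ℕ}

private lemma fin_val_one (hm : 1 ≤ m) : ((1 : Fin (m+1)) : ℕ) = 1 := by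
  rw [Fin.val_one']; exact Nat.mod_eq_of_lt (by omega)

private lemma fin_val_add_one (v : Fin (m+1)) :
    ((v + 1 : Fin (m+1)) : ℕ) = if (v:ℕ) = m then 0 else (v:ℕ) + 1 := by
  rw [Fin.val_add_one]
  rcases eq_or_ne v (Fin.last m) with h | h
  · simp [h]
  · rw [if_neg h, if_neg (by simpa [Fin.ext_iff] using h)]

private lemma fin_val_sub_one (hm : 1 ≤ m) (v : Fin (m+1)) :
    ((v - 1 : Fin (m+1)) : ℕ) = if (v:ℕ) = 0 then m else (v:ℕ) - 1 := by
  rw [Fin.sub_def]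
  simp only [fin_val_one hm]
  rcases Nat.eq_zero_or_pos (v:ℕ) with h | h
  · rw [if_pos h]
    have h2 : m + 1 - 1 + (v:ℕ) = m := by omega
    show (m + 1 - 1 + (v:ℕ)) % (m+1) = m
    rw [h2, Nat.mod_eq_of_lt (by omega)]
  · rw [if_neg (by omega)]
    have h2 : m + 1 - 1 + (v:ℕ) = ((v:ℕ) - 1) + (m+1) := by omega
    show (m + 1 - 1 + (v:ℕ)) % (m+1) = (v:ℕ) - 1
    rw [h2, Nat.add_mod_right, Nat.mod_eq_of_lt (by omega)]

private lemma cg_adj (hm : 1 ≤ m) {u v : Fin (m+1)} :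
    (cycleGraph (m+1)).Adj u v ↔ u - v = 1 ∨ v - u = 1 := by
  have h1 := fin_val_one (m := m) hm
  rw [cycleGraph_adj']
  constructor
  · rintro (h|h)
    exacts [Or.inl (Fin.ext (h.trans h1.symm)), Or.inr (Fin.ext (h.trans h1.symm))]
  · rintro (h|h)
    exacts [Or.inl (by rw [h, h1]), Or.inr (by rw [h, h1])]

private lemma mem_incident (hm : 2 ≤ m) (v : Fin (m+1)) (e : Sym2 (Fin (m+1))) :
    (e ∈ (cycleGraph (m+1)).edgeSet ∧ v ∈ e) ↔ (e = s(v, v-1) ∨ e = s(v, v+1)) := by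
  induction e using Sym2.ind with
  | _ a b =>
    simp only [mem_edgeSet, Sym2.mem_iff, Sym2.eq_iff, cg_adj (by omega : 1 ≤ m)]
    constructor
    · rintro ⟨h|h, rfl|rfl⟩
      · exact Or.inl (Or.inl ⟨rfl, by rw [← h]; ring⟩)
      · exact Or.inr (Or.inr ⟨by rw [← h]; ring, rfl⟩)
      · exact Or.inr (Or.inl ⟨rfl, by rw [← h]; ring⟩)
      · exact Or.inl (Or.inr ⟨by rw [← h]; ring, rfl⟩)
    · rintro ((⟨rfl,rfl⟩|⟨rfl,rfl⟩)|(⟨rfl,rfl⟩|⟨rfl,rfl⟩))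
      · exact ⟨Or.inl (by ring), Or.inl rfl⟩
      · exact ⟨Or.inr (by ring), Or.inr rfl⟩
      · exact ⟨Or.inr (by ring), Or.inl rfl⟩
      · exact ⟨Or.inl (by ring), Or.inr rfl⟩

private lemma edges_ne (hm : 2 ≤ m) (v : Fin (m+1)) :
    (s(v, v-1) : Sym2 (Fin (m+1))) ≠ s(v, v+1) := by
  have hs := fin_val_sub_one (by omega : 1 ≤ m) v
  have ha := fin_val_add_one v
  have hlt := v.isLt
  intro hcontra
  rw [Sym2.eq_iff] at hcontra
  rcases hcontra with ⟨-, h⟩ | ⟨h, -⟩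
  · have := congrArg Fin.val h
    rw [hs, ha] at this
    split_ifs at this <;> omega
  · have := congrArg Fin.val h
    rw [ha] at this
    split_ifs at this <;> omega

private lemma e1_mem (hm : 2 ≤ m) (v : Fin (m+1)) :
    (s(v, v-1) : Sym2 (Fin (m+1))) ∈ (cycleGraph (m+1)).edgeSet :=
  (mem_edgeSet _).mpr ((cg_adj (by omega)).mpr (Or.inl (by ring)))

private lemma e2_mem (hm : 2 ≤ m) (v : Fin (m+1)) :
    (s(v, v+1) : Sym2 (Fin (m+1))) ∈ (cycleGraph (m+1)).edgeSet :=
  (mem_edgeSet _).mpr ((cg_adj (by omega)).mpr (Or.inr (by ring)))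

private lemma ecount_eq (hm : 2 ≤ m) (φ : Sym2 (Fin (m+1)) → ℕ) (v : Fin (m+1)) (i : ℕ) :
    ecount (cycleGraph (m+1)) φ v i
      = {e | (e = s(v, v-1) ∨ e = s(v, v+1)) ∧ φ e = i}.ncard := by
  unfold ecount
  congr 1
  ext e
  simp only [Set.mem_setOf_eq, Set.mem_sep_iff, ← and_assoc, mem_incident hm v e]

private lemma ecount_le_one (hm : 2 ≤ m) (φ : Sym2 (Fin (m+1)) → ℕ) (v : Fin (m+1))
    (hne : φ s(v, v-1) ≠ φ s(v, v+1)) (i : ℕ) :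
    ecount (cycleGraph (m+1)) φ v i ≤ 1 := by
  rw [ecount_eq hm]
  by_cases h : φ s(v, v-1) = i
  · have hsub : {e | (e = s(v, v-1) ∨ e = s(v, v+1)) ∧ φ e = i} ⊆ {s(v, v-1)} := by
      rintro e ⟨rfl | rfl, hφ⟩
      · rfl
      · exact absurd (h.trans hφ.symm) hne
    calc _ ≤ ({s(v, v-1)} : Set (Sym2 (Fin (m+1)))).ncard :=
          Set.ncard_le_ncard hsub (Set.finite_singleton _)
      _ = 1 := Set.ncard_singleton _
  · have hsub : {e | (e = s(v, v-1) ∨ e = s(v, v+1)) ∧ φ e = i} ⊆ {s(v, v+1)} := by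
      rintro e ⟨rfl | rfl, hφ⟩
      · exact absurd hφ h
      · rfl
    calc _ ≤ ({s(v, v+1)} : Set (Sym2 (Fin (m+1)))).ncard :=
          Set.ncard_le_ncard hsub (Set.finite_singleton _)
      _ = 1 := Set.ncard_singleton _

private lemma ecount_eq_two (hm : 2 ≤ m) (φ : Sym2 (Fin (m+1)) → ℕ) (v : Fin (m+1)) (c : ℕ)
    (h1 : φ s(v, v-1) = c) (h2 : φ s(v, v+1) = c) :
    ecount (cycleGraph (m+1)) φ v c = 2 := by
  rw [ecount_eq hm]
  have hset : {e | (e = s(v, v-1) ∨ e = s(v, v+1)) ∧ φ e = c}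
      = {s(v, v-1), s(v, v+1)} := by
    ext e
    constructor
    · rintro ⟨h, -⟩; exact h
    · rintro (rfl | rfl)
      · exact ⟨Or.inl rfl, h1⟩
      · exact ⟨Or.inr rfl, h2⟩
  rw [hset, Set.ncard_pair (edges_ne hm v)]

private lemma ecount_eq_zero (hm : 2 ≤ m) (φ : Sym2 (Fin (m+1)) → ℕ) (v : Fin (m+1)) (i : ℕ)
    (h1 : φ s(v, v-1) ≠ i) (h2 : φ s(v, v+1) ≠ i) :
    ecount (cycleGraph (m+1)) φ v i = 0 := by
  rw [ecount_eq hm]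
  have hset : {e | (e = s(v, v-1) ∨ e = s(v, v+1)) ∧ φ e = i} = ∅ := by
    ext e
    simp only [Set.mem_setOf_eq, Set.mem_empty_iff_false, iff_false]
    rintro ⟨rfl | rfl, hφ⟩
    exacts [h1 hφ, h2 hφ]
  rw [hset, Set.ncard_empty]

end Aux

section Col

variable {m : ℕ}

private def col (m : ℕ) (a b : Fin (m+1)) : ℕ :=
  if (a.val = 0 ∧ b.val = m) ∨ (b.val = 0 ∧ a.val = m) then 3
  else if min a.val b.val % 2 = 0 then 1 else 2

private def myφ (m : ℕ) : Sym2 (Fin (m+1)) → ℕ :=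
  Sym2.lift ⟨col m, by
    intro a b
    unfold col
    rw [min_comm]
    by_cases h : (a.val = 0 ∧ b.val = m) ∨ (b.val = 0 ∧ a.val = m)
    · rw [if_pos h, if_pos (Or.symm h)]
    · rw [if_neg h, if_neg (fun hh => h (Or.symm hh))]⟩

private lemma myφ_mk (a b : Fin (m+1)) : myφ m s(a, b) = col m a b := rfl

private lemma col_bounds (a b : Fin (m+1)) : 1 ≤ col m a b ∧ col m a b ≤ 3 := by
  unfold col; split_ifs <;> omega

private lemma col_ne (hm : 2 ≤ m) (v : Fin (m+1)) :
    col m v (v - 1) ≠ col m v (v + 1) := by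
  have hs := fin_val_sub_one (by omega : 1 ≤ m) v
  have ha := fin_val_add_one v
  have hlt := v.isLt
  unfold col
  rw [hs, ha]
  split_ifs <;> omega

private lemma exists_col (hm : 2 ≤ m) (k : ℕ) (hk : 3 ≤ k) :
    ∃ φ, IsEquitableEdgeColoring (cycleGraph (m+1)) k φ := by
  refine ⟨myφ m, ?_, ?_⟩
  · intro e he
    induction e using Sym2.ind with
    | _ a b =>
      rw [myφ_mk, Finset.mem_Icc]
      have h := col_bounds (m := m) a b
      omega
  · intro v i j hi hij hjk
    have hne : myφ m s(v, v-1) ≠ myφ m s(v, v+1) := by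
      rw [myφ_mk, myφ_mk]; exact col_ne hm v
    have h1 := ecount_le_one hm (myφ m) v hne i
    have h2 := ecount_le_one hm (myφ m) v hne j
    omega

end Col

private lemma no_two (n : ℕ) (hn : 1 ≤ n) :
    ¬ ∃ φ, IsEquitableEdgeColoring (cycleGraph (2*n+1)) 2 φ := by
  rintro ⟨φ, hrange, heq⟩
  have hm2 : 2 ≤ 2*n := by omega
  have key : ∀ v : Fin (2*n+1), φ s(v, v+1) ≠ φ s(v+1, (v+1)+1) := by
    intro v h
    set w : Fin (2*n+1) := v + 1 with hw
    have e1 : (s(w, w-1) : Sym2 (Fin (2*n+1))) = s(v, v+1) := by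
      rw [show w - 1 = v by rw [hw]; ring, Sym2.eq_swap]
    obtain ⟨c, hcv⟩ : ∃ c, φ s(v, v+1) = c := ⟨_, rfl⟩
    have hmem := hrange _ (e2_mem hm2 v)
    rw [hcv, Finset.mem_Icc] at hmem
    have h1 : φ s(w, w-1) = c := by rw [e1, hcv]
    have h2 : φ s(w, w+1) = c := by rw [← h, hcv]
    have hbig := ecount_eq_two hm2 φ w c h1 h2
    have hzero := ecount_eq_zero hm2 φ w (3 - c)
      (by omega) (by omega)
    have := heq w 1 2 le_rfl (by norm_num) le_rfl
    rcases (by omega : c = 1 ∨ c = 2) with rfl | rfl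
    · rw [hbig] at this
      rw [show (3:ℕ) - 1 = 2 from rfl] at hzero
      rw [hzero] at this
      omega
    · rw [hbig] at this
      rw [show (3:ℕ) - 2 = 1 from rfl] at hzero
      rw [hzero] at this
      omega
  set g : ℕ → ℕ := fun t => φ s((t : Fin (2*n+1)), (t : Fin (2*n+1)) + 1) with hg
  have hcast : ∀ t : ℕ, ((t+1 : ℕ) : Fin (2*n+1)) = (t : Fin (2*n+1)) + 1 := by
    intro t; push_cast; ring
  have gne : ∀ t : ℕ, g t ≠ g (t+1) := by
    intro t
    have := key (t : Fin (2*n+1))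
    simpa only [hg, hcast t] using this
  have grange : ∀ t : ℕ, 1 ≤ g t ∧ g t ≤ 2 := by
    intro t
    have := hrange _ (e2_mem hm2 (t : Fin (2*n+1)))
    rw [Finset.mem_Icc] at this
    exact this
  have geven : ∀ t : ℕ, g (2*t) = g 0 := by
    intro t
    induction t with
    | zero => rfl
    | succ t ih =>
      have h1 := gne (2*t)
      have h2 := gne (2*t+1)
      have r1 := grange (2*t)
      have r2 := grange (2*t+1)
      have r3 := grange (2*t+1+1)
      have r0 := grange 0
      have : 2*(t+1) = 2*t+1+1 := by ring
      rw [this]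
      omega
  have hfinal : g (2*n+1) = g 0 := by
    have : ((2*n+1 : ℕ) : Fin (2*n+1)) = ((0:ℕ) : Fin (2*n+1)) := by
      rw [Fin.natCast_self, Nat.cast_zero]
    simp only [hg, this, Nat.cast_zero]
  have := gne (2*n)
  rw [hfinal] at this
  exact this (geven n)


/-- An odd cycle C_{2n+1} (n ≥ 1) has no equitable edge 2-coloring, has an equitable
edge k-coloring for every k ≥ 3, and its equitable edge chromatic threshold equals 3. -/
theorem stmt3 (n : ℕ) (hn : 1 ≤ n) :
    (¬ ∃ φ, IsEquitableEdgeColoring (cycleGraph (2 * n + 1)) 2 φ) ∧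
    (∀ k : ℕ, 3 ≤ k → ∃ φ, IsEquitableEdgeColoring (cycleGraph (2 * n + 1)) k φ) ∧
    equitableEdgeThreshold (cycleGraph (2 * n + 1)) = 3 := by
  have hm2 : 2 ≤ 2*n := by omega
  refine ⟨no_two n hn, fun k hk => exists_col hm2 k hk, ?_⟩
  unfold equitableEdgeThreshold
  have h3 : 3 ∈ {k : ℕ | ∀ k', k ≤ k' →
      ∃ φ, IsEquitableEdgeColoring (cycleGraph (2 * n + 1)) k' φ} :=
    fun k' hk' => exists_col hm2 k' hk'
  apply le_antisymm (Nat.sInf_le h3)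
  apply le_csInf ⟨3, h3⟩
  intro b hb
  by_contra hb3
  push_neg at hb3
  obtain ⟨φ, hφ⟩ := hb 2 (by omega)
  exact no_two n hn ⟨φ, hφ⟩
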